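/- Let F be a field, H a finite group, n ≥ 1, and A ∈ M_n(F[H]) a matrix with A² = A. Let P ⊆ F[H]ⁿ be the image of the endomorphism of the left F[H]-module F[H]ⁿ given by right multiplication with A, so P is a finitely generated projective left F[H]-module. Then for every h ∈ H, left multiplication by h restricts to an F-linear endomorphism of P whose trace over F equals |C_H(h)| · Σ_{g ∈ (h⁻¹)} a_g, where Σᵢ Aᵢᵢ = Σ_{g ∈ H} a_g · g in F[H], (h⁻¹) denotes the conjugacy class of h⁻¹ in H, C_H(h) is the centralizer of h in H, and |C_H(h)| is interpreted as an element of F. -/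

import Mathlib

open scoped Classical

noncomputable def leftMulBy {F : Type*} [Field F] {H : Type*} [Group H] {n : ℕ}
    (P : Submodule (MonoidAlgebra F H) (Fin n → MonoidAlgebra F H)) (h : H) :
    P →ₗ[F] P where
  toFun x := ⟨(MonoidAlgebra.of F H h : MonoidAlgebra F H) • (x : Fin n → MonoidAlgebra F H),
    P.smul_mem _ x.2⟩
  map_add' x y := by apply Subtype.ext; simp
  map_smul' c x := by
    apply Subtype.ext
    simp only [SetLike.val_smul, RingHom.id_apply]
    exact smul_comm _ _ _

section Aux

variable {F : Type*} [Field F] {H : Type*} [Group H] [Fintype H] [DecidableEq H]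

noncomputable instance : Module.Finite F (MonoidAlgebra F H) :=
  Module.Finite.equiv
    ((Finsupp.linearEquivFunOnFinite F F H).symm.trans (MonoidAlgebra.coeffLinearEquiv F).symm :
      (H → F) ≃ₗ[F] MonoidAlgebra F H)

/-- The "monomial" basis of the group algebra over `F`. -/
noncomputable def maBasis (F : Type*) [Field F] (H : Type*) : Module.Basis H F (MonoidAlgebra F H) :=
  Module.Basis.ofRepr (MonoidAlgebra.coeffLinearEquiv F)

set_option linter.unusedSectionVars false

lemma maBasis_apply (g : H) : maBasis F H g = MonoidAlgebra.single g 1 := by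
  rw [Module.Basis.apply_eq_iff]
  rfl

/-- Counting the fiber of conjugation. -/
lemma fiber_card (h k : H) (hk : IsConj h⁻¹ k) :
    (Finset.univ.filter fun g : H => g⁻¹ * (h⁻¹ * g) = k).card =
      Nat.card (Subgroup.centralizer ({h} : Set H)) := by
  obtain ⟨c, hc⟩ := isConj_iff.mp hk
  rw [Nat.card_eq_fintype_card, Fintype.card_subtype]
  apply Finset.card_bij (fun g _ => g * c)
  · intro g hg
    simp only [Finset.mem_filter, Finset.mem_univ, true_and] at hg ⊢
    rw [Subgroup.mem_centralizer_singleton_iff]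
    have e1 : h⁻¹ * (g * c) = (g * c) * h⁻¹ := by
      have e0 : g * (g⁻¹ * (h⁻¹ * g)) * c = g * (c * h⁻¹ * c⁻¹) * c := by rw [hg, hc]
      simpa [mul_assoc] using e0
    have : Commute h⁻¹ (g * c) := e1
    simpa using (this.inv_left.symm).eq
  · intro a _ b _ hab
    exact mul_right_cancel hab
  · intro z hz
    simp only [Finset.mem_filter, Finset.mem_univ, true_and] at hz
    rw [Subgroup.mem_centralizer_singleton_iff] at hz
    refine ⟨z * c⁻¹, ?_, by simp [mul_assoc]⟩
    simp only [Finset.mem_filter, Finset.mem_univ, true_and]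
    have hz2 : z⁻¹ * h⁻¹ = h⁻¹ * z⁻¹ := by rw [← mul_inv_rev, ← mul_inv_rev, hz]
    have e2 : (z * c⁻¹)⁻¹ * (h⁻¹ * (z * c⁻¹)) = c * (z⁻¹ * h⁻¹ * z) * c⁻¹ := by
      simp [mul_inv_rev, mul_assoc]
    rw [e2, hz2, ← hc]
    simp [mul_assoc]

lemma trace_eq_sum {n : ℕ} (A : Matrix (Fin n) (Fin n) (MonoidAlgebra F H))
    (hA : A * A = A) (h : H) :
    LinearMap.trace F (LinearMap.range A.vecMulLinear)
        (leftMulBy (LinearMap.range A.vecMulLinear) h) =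
      ∑ g : H, (Matrix.trace A).coeff (g⁻¹ * (h⁻¹ * g)) := by
  let R := MonoidAlgebra F H
  let M := (Fin n → R)
  let π : M →ₗ[R] M := A.vecMulLinear
  let P : Submodule R M := LinearMap.range π
  have hidem : ∀ x : M, x ∈ P → π x = x := by
    rintro x ⟨y, rfl⟩
    show A.vecMulLinear (A.vecMulLinear y) = A.vecMulLinear y
    simp only [Matrix.vecMulLinear_apply, Matrix.vecMul_vecMul, hA]
  let πF : M →ₗ[F] M := π.restrictScalars F
  let f : M →ₗ[F] M :=
    { toFun := fun x => (MonoidAlgebra.of F H h : R) • x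
      map_add' := fun x y => smul_add _ x y
      map_smul' := fun c x => smul_comm _ c x }
  let ι : P →ₗ[F] M := (P.restrictScalars F).subtype
  have hmem : ∀ x : M, πF x ∈ P.restrictScalars F := fun x => ⟨x, rfl⟩
  let q : M →ₗ[F] P := πF.codRestrict (P.restrictScalars F) hmem
  haveI : Module.Finite F P := (inferInstance : Module.Finite F (P.restrictScalars F))
  haveI : Module.Free F P := (inferInstance : Module.Free F (P.restrictScalars F))
  have key : (leftMulBy P h) = q ∘ₗ (f ∘ₗ ι) := by
    refine LinearMap.ext fun x => Subtype.ext ?_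
    show (MonoidAlgebra.of F H h : R) • (x : M) = π ((MonoidAlgebra.of F H h : R) • (x : M))
    rw [map_smul, hidem _ x.2]
  have hιq : (f ∘ₗ ι) ∘ₗ q = f ∘ₗ πF := rfl
  rw [show LinearMap.range A.vecMulLinear = P from rfl, key,
    ← LinearMap.trace_comp_comm' q (f ∘ₗ ι), hιq]
  -- now compute the trace over the monomial basis
  let b : Module.Basis (Σ _ : Fin n, H) F M := Pi.basis fun _ => maBasis F H
  have hb : ∀ (i : Fin n) (g : H), b ⟨i, g⟩ = Pi.single i (MonoidAlgebra.single g 1) := by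
    intro i g
    rw [show (Pi.single i (MonoidAlgebra.single g 1) : M) = Pi.single i (maBasis F H g) by
      rw [maBasis_apply], Module.Basis.apply_eq_iff, Pi.basis_repr_single]
  rw [LinearMap.trace_eq_matrix_trace F b, Matrix.trace]
  rw [← Finset.univ_sigma_univ, Finset.sum_sigma]
  refine Finset.sum_comm.trans ?_
  refine Finset.sum_congr rfl fun g _ => ?_
  simp only [Matrix.diag_apply]
  have entry : ∀ i : Fin n,
      (LinearMap.toMatrix b b (f ∘ₗ πF)) ⟨i, g⟩ ⟨i, g⟩ = (A i i).coeff (g⁻¹ * (h⁻¹ * g)) := by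
    intro i
    rw [LinearMap.toMatrix_apply, hb]
    have e3 : (f ∘ₗ πF) (Pi.single i (MonoidAlgebra.single g 1)) =
        fun j => MonoidAlgebra.single h 1 * (MonoidAlgebra.single g 1 * A i j) := by
      show (MonoidAlgebra.of F H h : R) • Matrix.vecMul (Pi.single i (MonoidAlgebra.single g 1)) A
          = _
      rw [Matrix.single_vecMul]
      funext j
      rw [Pi.smul_apply, MonoidAlgebra.of_apply, smul_eq_mul]
      rfl
    rw [e3]
    show ((MonoidAlgebra.single h 1 * (MonoidAlgebra.single g 1 * A i i) :
      MonoidAlgebra F H)).coeff g = _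
    simp only [MonoidAlgebra.coeff_single_mul_apply, one_mul]
  have tr : (Matrix.trace A).coeff (g⁻¹ * (h⁻¹ * g)) =
      ∑ i : Fin n, (A i i).coeff (g⁻¹ * (h⁻¹ * g)) := by
    rw [Matrix.trace, MonoidAlgebra.coeff_sum]
    exact Finsupp.finset_sum_apply _ _ _
  rw [tr]
  exact Finset.sum_congr rfl fun i _ => entry i

end Aux

theorem stmt_11 {F : Type*} [Field F] {H : Type*} [Group H] [Fintype H] [DecidableEq H]
    {n : ℕ} (hn : 1 ≤ n) (A : Matrix (Fin n) (Fin n) (MonoidAlgebra F H)) (hA : A * A = A)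
    (h : H) :
    LinearMap.trace F (LinearMap.range A.vecMulLinear)
        (leftMulBy (LinearMap.range A.vecMulLinear) h) =
      (Nat.card (Subgroup.centralizer ({h} : Set H)) : F) *
        ∑ g ∈ Finset.univ.filter fun g => IsConj h⁻¹ g,
          (Matrix.trace A).coeff g := by
  rw [trace_eq_sum A hA h]
  have maps : ∀ g ∈ (Finset.univ : Finset H),
      g⁻¹ * (h⁻¹ * g) ∈ Finset.univ.filter fun k => IsConj h⁻¹ k := by
    intro g _
    simp only [Finset.mem_filter, Finset.mem_univ, true_and]
    exact isConj_iff.mpr ⟨g⁻¹, by simp [mul_assoc]⟩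
  rw [← Finset.sum_fiberwise_of_maps_to maps]
  rw [Finset.mul_sum]
  refine Finset.sum_congr rfl fun k hk => ?_
  simp only [Finset.mem_filter, Finset.mem_univ, true_and] at hk
  have : ∀ g ∈ Finset.univ.filter fun g : H => g⁻¹ * (h⁻¹ * g) = k,
      (Matrix.trace A).coeff (g⁻¹ * (h⁻¹ * g)) = (Matrix.trace A).coeff k := by
    intro g hg
    simp only [Finset.mem_filter, Finset.mem_univ, true_and] at hg
    rw [hg]
  rw [Finset.sum_congr rfl this, Finset.sum_const, fiber_card h k hk, nsmul_eq_mul]
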